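/- arXiv:1301.5585 — 6 statements merged into one kernel-verified Lean document; each statement's English description precedes it below -/
import Mathlib

section
/- For every atom A of a regular language L and every word w ∈ Σ*, the left quotient w⁻¹A is a (possibly empty) union of atoms of L. -/
/-! Basic definitions: left quotients, atoms, and operations on finite automata. -/

/-- The left quotient of a language `L` by a word `w`: `w⁻¹L = {x | w ++ x ∈ L}`. -/
def leftQuot {α : Type} (L : Language α) (w : List α) : Language α := {x | w ++ x ∈ L}

/-- The set of all left quotients of `L`. -/
def quots {α : Type} (L : Language α) : Set (Language α) := {K | ∃ w : List α, K = leftQuot L w}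

/-- `A` is an atom of `L`: a non-empty intersection `K̃_0 ∩ ⋯ ∩ K̃_{n−1}` where each `K̃_i` is a
quotient `K_i` of `L` or its complement (`S` is the set of uncomplemented quotients, so a word is
in the intersection iff it belongs exactly to the quotients in `S`). -/
def IsAtomOf {α : Type} (L A : Language α) : Prop :=
  (∃ x, x ∈ A) ∧ ∃ S : Set (Language α), S ⊆ quots L ∧
    A = {x | ∀ K ∈ quots L, (x ∈ K ↔ K ∈ S)}

/-- A positive atom: at least one term of its defining intersection is uncomplemented,
equivalently the atom is contained in some quotient of `L`. -/
def IsPositiveAtomOf {α : Type} (L A : Language α) : Prop :=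
  IsAtomOf L A ∧ ∃ K ∈ quots L, ∀ x ∈ A, x ∈ K

namespace NFA

/-- The right language of a state `q`: words accepted starting from `q`. -/
def rightLang {α σ : Type} (M : NFA α σ) (q : σ) : Language α :=
  {w | ∃ p ∈ M.accept, p ∈ M.evalFrom {q} w}

/-- The left language of a state `q`: words leading from the initial states to `q`. -/
def leftLang {α σ : Type} (M : NFA α σ) (q : σ) : Language α :=
  {w | q ∈ M.eval w}

/-- An NFA is trim if every state has a non-empty left language and right language. -/
def IsTrim {α σ : Type} (M : NFA α σ) : Prop :=
  ∀ q, (∃ w, w ∈ M.leftLang q) ∧ (∃ w, w ∈ M.rightLang q)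

/-- An NFA is reduced if distinct states have distinct right languages. -/
def IsReduced {α σ : Type} (M : NFA α σ) : Prop :=
  ∀ q p, M.rightLang q = M.rightLang p → q = p

/-- An NFA is atomic if the right language of every state is a union of positive atoms of the
accepted language. -/
def IsAtomic {α σ : Type} (M : NFA α σ) : Prop :=
  ∀ q, ∃ 𝒜 : Set (Language α), (∀ A ∈ 𝒜, IsPositiveAtomOf M.accepts A) ∧
    M.rightLang q = {w | ∃ A ∈ 𝒜, w ∈ A}

/-- Reversal of an NFA: interchange initial and final states and reverse all transitions. -/
def rev {α σ : Type} (M : NFA α σ) : NFA α σ :=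
  ⟨fun q a => {p | q ∈ M.step p a}, M.accept, M.start⟩

/-- States of the determinization of an NFA: the subsets of states reachable from the initial
subset. -/
def detStates {α σ : Type} (M : NFA α σ) : Type := {S : Set σ // ∃ w, M.eval w = S}

instance {α σ : Type} [Finite σ] (M : NFA α σ) : Finite M.detStates :=
  Subtype.finite

/-- Determinization of an NFA by the subset construction, keeping only the subsets reachable
from the initial subset. -/
def det {α σ : Type} (M : NFA α σ) : DFA α M.detStates where
  step S a := ⟨M.stepSet S.1 a, by
    obtain ⟨w, hw⟩ := S.2
    exact ⟨w ++ [a], by rw [NFA.eval_append_singleton, hw]⟩⟩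
  start := ⟨M.start, [], rfl⟩
  accept := {S | ∃ p ∈ M.accept, p ∈ S.1}

end NFA

/-- Reversal of a DFA, yielding an NFA. -/
def DFA.rev {α σ : Type} (M : DFA α σ) : NFA α σ :=
  ⟨fun q a => {p | M.step p a = q}, M.accept, {M.start}⟩

/-- A DFA is minimal if no DFA accepting the same language has fewer states. -/
def DFA.IsMinimal {α σ : Type} (M : DFA α σ) : Prop :=
  ∀ (σ' : Type) (_ : Finite σ') (M' : DFA α σ'), M'.accepts = M.accepts →
    Nat.card σ ≤ Nat.card σ'

/-- For every atom `A` of a regular language `L` and every word `w`, the left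
quotient `w⁻¹A` is a (possibly empty) union of atoms of `L`. -/
theorem leftQuot_atom_union_atoms {α : Type} [Finite α] {L : Language α} (hL : L.IsRegular)
    {A : Language α} (hA : IsAtomOf L A) (w : List α) :
    ∃ 𝒜 : Set (Language α), (∀ B ∈ 𝒜, IsAtomOf L B) ∧
      leftQuot A w = {x | ∃ B ∈ 𝒜, x ∈ B} := by
  obtain ⟨⟨x0, hx0⟩, S, hS, hAeq⟩ := hA
  have hshift : ∀ (u : List α) (t : List α),
      w ++ t ∈ leftQuot L u ↔ t ∈ leftQuot L (u ++ w) := by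
    intro u t
    show u ++ (w ++ t) ∈ L ↔ (u ++ w) ++ t ∈ L
    rw [List.append_assoc]
  refine ⟨{B | ∃ x ∈ leftQuot A w, B = {y | ∀ K ∈ quots L, (y ∈ K ↔ x ∈ K)}}, ?_, ?_⟩
  · rintro B ⟨x, hx, rfl⟩
    refine ⟨⟨x, fun K _ => Iff.rfl⟩, {K | K ∈ quots L ∧ x ∈ K}, fun K hK => hK.1, ?_⟩
    ext y
    simp only [Set.mem_setOf_eq]
    constructor
    · intro h K hK
      rw [h K hK]
      exact ⟨fun hx' => ⟨hK, hx'⟩, fun h' => h'.2⟩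
    · intro h K hK
      rw [h K hK]
      exact ⟨And.right, fun hx' => ⟨hK, hx'⟩⟩
  · ext z
    simp only [Set.mem_setOf_eq]
    constructor
    · intro hz
      exact ⟨_, ⟨z, hz, rfl⟩, fun K _ => Iff.rfl⟩
    · rintro ⟨B, ⟨x, hx, rfl⟩, hz⟩
      have hx' : w ++ x ∈ A := hx
      rw [hAeq] at hx' ⊢
      intro K hK
      obtain ⟨u, rfl⟩ := hK
      have key : w ++ z ∈ leftQuot L u ↔ w ++ x ∈ leftQuot L u := by
        rw [hshift, hshift, hz _ ⟨u ++ w, rfl⟩]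
      rw [key]
      exact hx' _ ⟨u, rfl⟩
end

section
/- The reversal A^R of the átomaton A of a non-empty regular language L is a deterministic finite automaton, and A^R is a minimal DFA accepting the reversal language L^R. -/
/-- The átomaton of `L`: states are the atoms of `L`, the initial states are the initial atoms
(those contained in `L`, i.e., with `L` occurring uncomplemented among their terms), the final
states are the atoms containing `ε` (there is exactly one such atom when `L ≠ ∅`), and the atom
`B` is an `a`-successor of the atom `A` iff `a·B ⊆ A`. -/
def atomaton {α : Type} (L : Language α) : NFA α {A : Language α // IsAtomOf L A} where
  step A a := {B | ∀ w ∈ B.1, a :: w ∈ A.1}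
  start := {A | ∀ x ∈ A.1, x ∈ L}
  accept := {A | [] ∈ A.1}

/-! Auxiliary lemmas for the proof. -/

namespace AtomatonAux

variable {α : Type} (L : Language α)

/-- The atom of `L` containing the word `x`. -/
def atomOf (x : List α) : Language α := {y | ∀ K ∈ quots L, (y ∈ K ↔ x ∈ K)}

lemma self_mem_atomOf (x : List α) : x ∈ atomOf L x := fun _ _ => Iff.rfl

lemma isAtomOf_atomOf (x : List α) : IsAtomOf L (atomOf L x) := by
  refine ⟨⟨x, self_mem_atomOf L x⟩, {K | K ∈ quots L ∧ x ∈ K}, fun K hK => hK.1, ?_⟩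
  ext y
  constructor
  · intro hy K hK
    exact ⟨fun h => ⟨hK, (hy K hK).1 h⟩, fun h => (hy K hK).2 h.2⟩
  · intro hy K hK
    exact ⟨fun h => ((hy K hK).1 h).2, fun h => (hy K hK).2 ⟨hK, h⟩⟩

lemma atom_eq_atomOf {A : Language α} (hA : IsAtomOf L A) {x : List α} (hx : x ∈ A) :
    A = atomOf L x := by
  obtain ⟨-, S, _, rfl⟩ := hA
  have hx' : ∀ K ∈ quots L, (x ∈ K ↔ K ∈ S) := hx
  ext y
  constructor
  · intro hy K hK
    exact (hy K hK).trans (hx' K hK).symm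
  · intro hy K hK
    exact (hy K hK).trans (hx' K hK)

lemma cons_mem_atomOf {x y : List α} (h : y ∈ atomOf L x) (a : α) :
    a :: y ∈ atomOf L (a :: x) := by
  rintro K ⟨w, rfl⟩
  have := h _ ⟨w ++ [a], rfl⟩
  simp only [leftQuot, Set.mem_setOf_eq, List.append_assoc, List.singleton_append] at this ⊢
  exact this

lemma leftQuot_nil : leftQuot L [] = L := rfl

lemma L_mem_quots : L ∈ quots L := ⟨[], (leftQuot_nil L).symm⟩

lemma rev_eval_sound : ∀ (w : List α) (B : {A : Language α // IsAtomOf L A}),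
    B ∈ (atomaton L).rev.eval w → B.1 = atomOf L w.reverse := by
  intro w
  induction w using List.reverseRecOn with
  | nil =>
    intro B hB
    exact atom_eq_atomOf L B.2 hB
  | append_singleton v a ih =>
    intro B hB
    rw [NFA.eval_append_singleton, NFA.mem_stepSet] at hB
    obtain ⟨C, hC, hstep⟩ := hB
    have hCv : C.1 = atomOf L v.reverse := ih C hC
    have hmem : a :: v.reverse ∈ B.1 := hstep (v.reverse) (hCv ▸ self_mem_atomOf L v.reverse)
    rw [List.reverse_append, List.reverse_singleton, List.singleton_append]
    exact atom_eq_atomOf L B.2 hmem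

lemma rev_eval_complete : ∀ (w : List α),
    (⟨atomOf L w.reverse, isAtomOf_atomOf L w.reverse⟩ : {A : Language α // IsAtomOf L A}) ∈
      (atomaton L).rev.eval w := by
  intro w
  induction w using List.reverseRecOn with
  | nil => exact self_mem_atomOf L []
  | append_singleton v a ih =>
    rw [NFA.eval_append_singleton, NFA.mem_stepSet]
    refine ⟨⟨atomOf L v.reverse, isAtomOf_atomOf L v.reverse⟩, ih, ?_⟩
    intro u hu
    have : a :: u ∈ atomOf L (a :: v.reverse) := cons_mem_atomOf L hu a
    simpa [List.reverse_append] using this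

end AtomatonAux

/-- The reversal of the átomaton of a non-empty regular language `L` is
deterministic (it has exactly one initial state and exactly one successor per state and letter),
it accepts the reversal language `L^R`, and it is a minimal DFA for `L^R`: no DFA accepting
`L^R` has fewer states than the number of atoms of `L`. -/

theorem atomaton_rev_minimal_dfa {α : Type} [Finite α] {L : Language α} (hL : L.IsRegular)
    (hne : ∃ w, w ∈ L) :
    (∃! A : {A : Language α // IsAtomOf L A}, A ∈ (atomaton L).rev.start) ∧
    (∀ (A : {A : Language α // IsAtomOf L A}) (a : α),
      ∃! B : {A : Language α // IsAtomOf L A}, B ∈ (atomaton L).rev.step A a) ∧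
    (atomaton L).rev.accepts = L.reverse ∧
    (∀ (σ' : Type) (_ : Finite σ') (D' : DFA α σ'), D'.accepts = L.reverse →
      Nat.card {A : Language α // IsAtomOf L A} ≤ Nat.card σ') := by
  open AtomatonAux in
  refine ⟨?_, ?_, ?_, ?_⟩
  · -- unique initial state of the reversal
    refine ⟨⟨atomOf L [], isAtomOf_atomOf L []⟩, self_mem_atomOf L [], ?_⟩
    intro A hA
    exact Subtype.ext (atom_eq_atomOf L A.2 hA)
  · -- deterministic transitions
    intro A a
    obtain ⟨x, hx⟩ := A.2.1
    have hAx : A.1 = atomOf L x := atom_eq_atomOf L A.2 hx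
    refine ⟨⟨atomOf L (a :: x), isAtomOf_atomOf L (a :: x)⟩, ?_, ?_⟩
    · intro u hu
      exact cons_mem_atomOf L (hAx ▸ hu) a
    · intro B hB
      have : a :: x ∈ B.1 := hB x hx
      exact Subtype.ext (atom_eq_atomOf L B.2 this)
  · -- accepts the reversal language
    ext w
    rw [NFA.mem_accepts, Language.mem_reverse]
    constructor
    · rintro ⟨B, hBacc, hBev⟩
      have hB : B.1 = atomOf L w.reverse := rev_eval_sound L w B hBev
      exact hBacc w.reverse (hB ▸ self_mem_atomOf L w.reverse)
    · intro hw
      refine ⟨⟨atomOf L w.reverse, isAtomOf_atomOf L w.reverse⟩, ?_, rev_eval_complete L w⟩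
      intro y hy
      have := hy L (L_mem_quots L)
      exact this.2 hw
  · -- minimality
    intro σ' hfin D' hD
    haveI := hfin
    have hch : ∀ A : {A : Language α // IsAtomOf L A}, ∃ x, x ∈ A.1 := fun A => A.2.1
    choose xa hxa using hch
    refine Nat.card_le_card_of_injective
      (fun A => D'.evalFrom D'.start (xa A).reverse) ?_
    intro A B hAB
    simp only at hAB
    have key : ∀ w : List α, (w ++ xa A ∈ L ↔ w ++ xa B ∈ L) := by
      intro w
      have h1 : ∀ C, ((xa C).reverse ++ w.reverse ∈ D'.accepts ↔ (w ++ xa C) ∈ L) := by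
        intro C
        rw [hD, Language.mem_reverse]
        simp [List.reverse_append]
      have h2 : ((xa A).reverse ++ w.reverse ∈ D'.accepts ↔
          (xa B).reverse ++ w.reverse ∈ D'.accepts) := by
        rw [DFA.mem_accepts, DFA.mem_accepts, DFA.eval, DFA.evalFrom_of_append,
          DFA.evalFrom_of_append, hAB]
      rw [← h1 A, ← h1 B]
      exact h2
    have hxB : xa A ∈ atomOf L (xa B) := by
      rintro K ⟨w, rfl⟩
      exact key w
    have e1 : A.1 = atomOf L (xa A) := atom_eq_atomOf L A.2 (hxa A)
    have e2 : B.1 = atomOf L (xa B) := atom_eq_atomOf L B.2 (hxa B)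
    have e3 : atomOf L (xa B) = atomOf L (xa A) :=
      atom_eq_atomOf L (isAtomOf_atomOf L (xa B)) hxB
    exact Subtype.ext (e1.trans (e3.symm.trans e2.symm))
end

section
/- If D is a DFA accepting a language L in which every state is reachable from the initial state, then D^{R D}, the automaton obtained from D by reversal followed by determinization viaapply the subset construction (keeping only subsets reachable from the initial subset), is a minimal DFA accepting the reversal language L^R. -/
lemma DFA.rev_stepSet {α σ : Type} (D : DFA α σ) (S : Set σ) (a : α) :
    D.rev.stepSet S a = {p | D.step p a ∈ S} := by
  ext p
  simp [NFA.stepSet, DFA.rev]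

lemma DFA.rev_evalFrom {α σ : Type} (D : DFA α σ) (w : List α) (S : Set σ) :
    D.rev.evalFrom S w = {p | D.evalFrom p w.reverse ∈ S} := by
  induction w generalizing S with
  | nil => rfl
  | cons a w ih =>
    have h1 : D.rev.evalFrom S (a :: w) = D.rev.evalFrom (D.rev.stepSet S a) w := rfl
    rw [h1, ih, DFA.rev_stepSet]
    ext p
    simp only [Set.mem_setOf_eq, List.reverse_cons, DFA.evalFrom_append_singleton]

lemma DFA.rev_eval {α σ : Type} (D : DFA α σ) (w : List α) :
    D.rev.eval w = {p | D.evalFrom p w.reverse ∈ D.accept} :=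
  D.rev_evalFrom w D.accept

lemma NFA.det_evalFrom {α σ : Type} (M : NFA α σ) (w : List α) (S : M.detStates) :
    (M.det.evalFrom S w).1 = M.evalFrom S.1 w := by
  induction w generalizing S with
  | nil => rfl
  | cons a w ih => exact ih (M.det.step S a)

lemma NFA.det_eval {α σ : Type} (M : NFA α σ) (w : List α) :
    (M.det.eval w).1 = M.eval w :=
  M.det_evalFrom w M.det.start

lemma DFA.mem_rev_det_accepts {α σ : Type} (D : DFA α σ) (x : List α) :
    x ∈ D.rev.det.accepts ↔ D.eval x.reverse ∈ D.accept := by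
  rw [DFA.mem_accepts]
  show (∃ p ∈ D.rev.accept, p ∈ (D.rev.det.eval x).1) ↔ _
  rw [NFA.det_eval]
  show (∃ p ∈ ({D.start} : Set σ), p ∈ D.rev.eval x) ↔ _
  rw [DFA.rev_eval]
  simp [DFA.eval]

/-- If `D` is a DFA accepting `L` in which every state is reachable from the
initial state, then `D^{R D}` (reversal followed by determinization keeping only reachable
subsets) is a minimal DFA accepting the reversal language `L^R`. -/
theorem brzozowski_minimal {α σ : Type} [Finite σ] (D : DFA α σ) (L : Language α)
    (hacc : D.accepts = L) (hreach : ∀ q : σ, ∃ w : List α, D.eval w = q) :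
    D.rev.det.accepts = L.reverse ∧ D.rev.det.IsMinimal := by
  have hmem : ∀ x : List α, x ∈ D.rev.det.accepts ↔ x.reverse ∈ L := by
    intro x
    rw [D.mem_rev_det_accepts, ← hacc, DFA.mem_accepts]
  constructor
  · ext x
    rw [hmem, Language.mem_reverse]
  · intro σ' hfin M' hM'
    have key : ∀ w : List α, D.rev.eval w = {q | w ++ (hreach q).choose.reverse ∈ M'.accepts} := by
      intro w
      ext q
      have hu := (hreach q).choose_spec
      rw [DFA.rev_eval, Set.mem_setOf_eq, Set.mem_setOf_eq, hM', hmem,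
        List.reverse_append, List.reverse_reverse, ← hacc, DFA.mem_accepts]
      rw [show D.eval ((hreach q).choose ++ w.reverse)
            = D.evalFrom (D.eval (hreach q).choose) w.reverse from
          D.evalFrom_of_append _ _ _, hu]
    set f : D.rev.detStates → σ' := fun S => M'.eval S.2.choose with hf
    have hinj : Function.Injective f := by
      intro S₁ S₂ hfS
      have h₁ := S₁.2.choose_spec
      have h₂ := S₂.2.choose_spec
      apply Subtype.ext
      rw [← h₁, ← h₂, key, key]
      ext q
      simp only [Set.mem_setOf_eq, DFA.mem_accepts]
      have : ∀ x, M'.eval (S₁.2.choose ++ x) = M'.eval (S₂.2.choose ++ x) := by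
        intro x
        show M'.evalFrom M'.start (S₁.2.choose ++ x) = M'.evalFrom M'.start (S₂.2.choose ++ x)
        rw [DFA.evalFrom_of_append, DFA.evalFrom_of_append]
        exact congrArg (fun s => M'.evalFrom s x) hfS
      rw [this]
    exact Nat.card_le_card_of_injective f hinj
end

section
/- Let L be a non-empty regular language with quotient DFA D and átomaton A. The map φ that assigns to each atom A_j = K_{i_0} ∩ ⋯ ∩ K_{i_{n−r−1}} ∩ K̄_{i_{n−r}} ∩ ⋯ ∩ K̄_{i_{n−1}} the set {K_{i_0},…,K_{i_{n−r−1}}} of its uncomplemented quotients is a DFA isomorphism between A^R (the reversal of the átomaton) and D^{R D} (the determinized reversal of the quotient DFA): φ is a bijection from the states of A^R onto the states of D^{R D} that maps the initial state to the initial state, final states onto final states, and commutes with the transition functions. -/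
theorem leftQuot_leftQuot {α : Type} (L : Language α) (w v : List α) :
    leftQuot (leftQuot L w) v = leftQuot L (w ++ v) :=
  Set.ext fun x => by
    show w ++ (v ++ x) ∈ L ↔ (w ++ v) ++ x ∈ L
    rw [List.append_assoc]

theorem leftQuot_nil {α : Type} (L : Language α) : leftQuot L [] = L :=
  Set.ext fun _ => Iff.rfl

/-- The quotient DFA of `L`: states are the left quotients of `L`, the initial state is `L`
itself, the final states are the quotients containing `ε`, and `δ(K, a) = a⁻¹K`. -/
def quotDFA {α : Type} (L : Language α) : DFA α {K : Language α // K ∈ quots L} where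
  step K a := ⟨leftQuot K.1 [a], by
    obtain ⟨w, hw⟩ := K.2
    exact ⟨w ++ [a], by rw [hw, leftQuot_leftQuot]⟩⟩
  start := ⟨L, [], (leftQuot_nil L).symm⟩
  accept := {K | [] ∈ K.1}

section Aux

variable {α : Type} {L : Language α}

theorem mem_atom_iff {A : Language α} (h : IsAtomOf L A) {x : List α} (hx : x ∈ A)
    (y : List α) : y ∈ A ↔ ∀ K ∈ quots L, (y ∈ K ↔ x ∈ K) := by
  obtain ⟨-, S, -, rfl⟩ := h
  constructor
  · exact fun hy K hK => (hy K hK).trans (hx K hK).symm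
  · exact fun hy K hK => (hy K hK).trans (hx K hK)

theorem atom_eq {A B : Language α} (hA : IsAtomOf L A) (hB : IsAtomOf L B) {x : List α}
    (hxA : x ∈ A) (hxB : x ∈ B) : A = B :=
  Set.ext fun z => (mem_atom_iff hA hxA z).trans (mem_atom_iff hB hxB z).symm

theorem quot_step {K : Language α} (hK : K ∈ quots L) (a : α) : leftQuot K [a] ∈ quots L := by
  obtain ⟨w, rfl⟩ := hK
  exact ⟨w ++ [a], leftQuot_leftQuot L w [a]⟩

theorem phi_spec {A : Language α} (hA : IsAtomOf L A) {x : List α} (hx : x ∈ A) :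
    {K : {K : Language α // K ∈ quots L} | ∀ z ∈ A, z ∈ K.1} = {K | x ∈ K.1} := by
  ext K
  simp only [Set.mem_setOf_eq]
  refine ⟨fun h => h x hx, fun hxK z hz => ?_⟩
  exact (((mem_atom_iff hA hx z).mp hz) K.1 K.2).mpr hxK

theorem rev_stepSet_eq (x : List α) (a : α) :
    (quotDFA L).rev.stepSet {K | x ∈ K.1} a = {K | a :: x ∈ K.1} := by
  ext K
  simp only [NFA.stepSet, DFA.rev, Set.mem_iUnion, Set.mem_setOf_eq]
  constructor
  · rintro ⟨s, hs, h⟩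
    rw [← h] at hs
    exact hs
  · intro h
    exact ⟨(quotDFA L).step K a, h, rfl⟩

theorem rev_eval (w : List α) : (quotDFA L).rev.eval w = {K | w.reverse ∈ K.1} := by
  induction w using List.reverseRecOn with
  | nil => rfl
  | append_singleton w a ih =>
    rw [NFA.eval_append_singleton, ih]
    show (quotDFA L).rev.stepSet _ a = _
    rw [rev_stepSet_eq]
    simp

/-- The isomorphism: an atom maps to the set of quotients containing it. -/
def phiMap (L : Language α) (A : {A : Language α // IsAtomOf L A}) :
    (quotDFA L).rev.detStates :=
  ⟨{K | ∀ x ∈ A.1, x ∈ K.1}, by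
    obtain ⟨x, hx⟩ := A.2.1
    refine ⟨x.reverse, ?_⟩
    rw [rev_eval]
    simp only [List.reverse_reverse]
    exact (phi_spec A.2 hx).symm⟩

theorem phiMap_bijective : Function.Bijective (phiMap L) := by
  constructor
  · intro A B h
    obtain ⟨x, hx⟩ := A.2.1
    obtain ⟨y, hy⟩ := B.2.1
    have hset : ({K : {K : Language α // K ∈ quots L} | x ∈ K.1})
        = {K | y ∈ K.1} := by
      rw [← phi_spec A.2 hx, ← phi_spec B.2 hy]
      exact congrArg Subtype.val h
    have hxB : x ∈ B.1 := by
      rw [mem_atom_iff B.2 hy x]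
      intro K hK
      exact Set.ext_iff.mp hset ⟨K, hK⟩
    exact Subtype.ext (atom_eq A.2 B.2 hx hxB)
  · rintro ⟨S, w, rfl⟩
    have hA : IsAtomOf L {z | ∀ K ∈ quots L, (z ∈ K ↔ w.reverse ∈ K)} := by
      refine ⟨⟨w.reverse, fun K _ => Iff.rfl⟩,
        {K | K ∈ quots L ∧ w.reverse ∈ K}, fun K hK => hK.1, ?_⟩
      ext z
      exact forall₂_congr fun K hK => by simp [hK]
    refine ⟨⟨_, hA⟩, Subtype.ext ?_⟩
    have hx : w.reverse ∈ {z | ∀ K ∈ quots L, (z ∈ K ↔ w.reverse ∈ K)} :=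
      fun K _ => Iff.rfl
    exact (phi_spec hA hx).trans (rev_eval w).symm

end Aux

/-- The map `φ` assigning to each atom the set of quotients occurring
uncomplemented in it (equivalently, the quotients containing it) is a DFA isomorphism between
`A^R` (the reversal of the átomaton) and `D^{R D}` (the determinized reversal of the quotient
DFA): a bijection of the state sets mapping the initial state to the initial state, final
states onto final states, and commuting with the transition functions. -/
theorem atomaton_rev_iso_det {α : Type} [Finite α] {L : Language α} (hL : L.IsRegular)
    (hne : ∃ w, w ∈ L) :
    ∃ e : {A : Language α // IsAtomOf L A} ≃ (quotDFA L).rev.detStates,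
      (∀ A, (e A).1 = {K : {K : Language α // K ∈ quots L} | ∀ x ∈ A.1, x ∈ K.1}) ∧
      (∀ A, A ∈ (atomaton L).rev.start ↔ e A = (quotDFA L).rev.det.start) ∧
      (∀ A, A ∈ (atomaton L).rev.accept ↔ e A ∈ (quotDFA L).rev.det.accept) ∧
      (∀ A B a, B ∈ (atomaton L).rev.step A a ↔ (quotDFA L).rev.det.step (e A) a = e B) := by
  refine ⟨Equiv.ofBijective (phiMap L) phiMap_bijective, fun A => rfl, ?_, ?_, ?_⟩
  · -- start states
    intro A
    show [] ∈ A.1 ↔ phiMap L A = (quotDFA L).rev.det.start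
    rw [show ∀ (S T : (quotDFA L).rev.detStates), S = T ↔ S.1 = T.1 from fun S T => Subtype.ext_iff]
    constructor
    · intro h
      exact phi_spec A.2 h
    · intro h
      obtain ⟨x, hx⟩ := A.2.1
      have hset : ({K : {K : Language α // K ∈ quots L} | x ∈ K.1})
          = {K | [] ∈ K.1} := by
        rw [← phi_spec A.2 hx]; exact h
      rw [mem_atom_iff A.2 hx []]
      intro K hK
      exact (Set.ext_iff.mp hset ⟨K, hK⟩).symm
  · -- accept states
    intro A
    show (∀ x ∈ A.1, x ∈ L) ↔ ∃ p ∈ (quotDFA L).rev.accept, p ∈ (phiMap L A).1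
    constructor
    · intro h
      exact ⟨(quotDFA L).start, rfl, h⟩
    · rintro ⟨p, hp, hpA⟩
      have : p = (quotDFA L).start := hp
      rw [this] at hpA
      exact hpA
  · -- transitions
    intro A B a
    show (∀ w ∈ A.1, a :: w ∈ B.1) ↔ (quotDFA L).rev.det.step (phiMap L A) a = phiMap L B
    rw [show ∀ (S T : (quotDFA L).rev.detStates), S = T ↔ S.1 = T.1 from fun S T => Subtype.ext_iff]
    show (∀ w ∈ A.1, a :: w ∈ B.1) ↔
      (quotDFA L).rev.stepSet (phiMap L A).1 a = (phiMap L B).1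
    obtain ⟨x, hx⟩ := A.2.1
    obtain ⟨y, hy⟩ := B.2.1
    have hA1 : (phiMap L A).1 = {K | x ∈ K.1} := phi_spec A.2 hx
    rw [hA1, rev_stepSet_eq]
    constructor
    · intro h
      exact (phi_spec B.2 (h x hx)).symm
    · intro h
      intro w hw
      have hB1 : (phiMap L B).1 = {K | y ∈ K.1} := phi_spec B.2 hy
      rw [hB1] at h
      rw [mem_atom_iff B.2 hy (a :: w)]
      intro K hK
      have h1 : a :: w ∈ K ↔ x ∈ leftQuot K [a] :=
        (mem_atom_iff A.2 hx w).mp hw (leftQuot K [a]) (quot_step hK a)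
      have h2 : (⟨K, hK⟩ : {K : Language α // K ∈ quots L}) ∈
          ({K : {K : Language α // K ∈ quots L} | a :: x ∈ K.1}) ↔
          (⟨K, hK⟩ : {K : Language α // K ∈ quots L}) ∈ {K | y ∈ K.1} := by rw [h]
      exact h1.trans h2
end

section
/- Let L be a non-empty regular language with átomaton A = (𝒜, Σ, α, I_A, {A_f}), and let B = (𝒞, Σ, β, 𝒞_I, 𝒞_F) be a trim NFA whose states B_1,…,B_r are distinct non-empty sets of positive atoms of L, with 𝒞_I, 𝒞_F ⊆ 𝒞; for 𝒞_i ⊆ 𝒞 let S(𝒞_i) = ⋃_{B_i ∈ 𝒞_i} B_i. Then B is a reduced atomic NFA accepting L, in which the right language of each state B_i equals the union of the atoms in B_i, if and only if the following three conditions hold: (1) S(𝒞_I) equals the set of initial atoms I_A; (2) S(β(B_i, a)) = α(B_i, a) for every state B_i and letter a; (3) B_i ∈ 𝒞_F if and only if the final atom A_f belongs to B_i. -/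
/-- The atom of `L` containing the word `w`: the intersection `K̃_0 ∩ ⋯ ∩ K̃_{n−1}` in which
`K̃_i = K_i` if `w ∈ K_i` and `K̃_i = K̄_i` otherwise. -/
def atomIn {α : Type} (L : Language α) (w : List α) : Language α :=
  {x | ∀ K ∈ quots L, (x ∈ K ↔ w ∈ K)}

/-- The transition relation `α` of the átomaton, on atoms as languages: `B ∈ atomStep L A a`
iff `B` is an atom of `L` with `a·B ⊆ A`. -/
def atomStep {α : Type} (L : Language α) (A : Language α) (a : α) : Set (Language α) :=
  {B | IsAtomOf L B ∧ ∀ x ∈ B, a :: x ∈ A}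

/-- `atomStep` extended to a set of atoms. -/
def atomStepSet {α : Type} (L : Language α) (S : Set (Language α)) (a : α) :
    Set (Language α) :=
  ⋃ A ∈ S, atomStep L A a

/-- `atomStepSet` extended to words. -/
def atomEval {α : Type} (L : Language α) (S : Set (Language α)) : List α → Set (Language α) :=
  List.foldl (atomStepSet L) S

section Helpers

variable {α σ : Type} {L A : Language α}

private lemma mem_atomIn {x w : List α} :
    x ∈ atomIn L w ↔ ∀ u : List α, u ++ x ∈ L ↔ u ++ w ∈ L := by
  constructor
  · intro h u
    exact h (leftQuot L u) ⟨u, rfl⟩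
  · rintro h K ⟨u, rfl⟩
    exact h u

private lemma self_mem_atomIn {w : List α} : w ∈ atomIn L w :=
  fun _ _ => Iff.rfl

private lemma atomIn_cons {x w : List α} (a : α) (h : x ∈ atomIn L w) :
    a :: x ∈ atomIn L (a :: w) := by
  rw [mem_atomIn] at h ⊢
  intro u
  simpa [List.append_assoc] using h (u ++ [a])

private lemma atomIn_eq_of_mem {x w : List α} (h : x ∈ atomIn L w) :
    atomIn L x = atomIn L w := by
  rw [mem_atomIn] at h
  ext y
  rw [mem_atomIn, mem_atomIn]
  exact ⟨fun hy u => (hy u).trans (h u), fun hy u => (hy u).trans (h u).symm⟩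

private lemma isAtomOf_iff : IsAtomOf L A ↔ ∃ w, A = atomIn L w := by
  constructor
  · rintro ⟨⟨x, hx⟩, S, hS, hA⟩
    refine ⟨x, ?_⟩
    have hx' : ∀ K ∈ quots L, (x ∈ K ↔ K ∈ S) := by rw [hA] at hx; exact hx
    ext y
    rw [hA]
    show (∀ K ∈ quots L, (y ∈ K ↔ K ∈ S)) ↔ ∀ K ∈ quots L, (y ∈ K ↔ x ∈ K)
    constructor
    · intro hy K hK
      exact (hy K hK).trans (hx' K hK).symm
    · intro hy K hK
      exact (hy K hK).trans (hx' K hK)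
  · rintro ⟨w, rfl⟩
    refine ⟨⟨w, self_mem_atomIn⟩, {K | K ∈ quots L ∧ w ∈ K}, fun K hK => hK.1, ?_⟩
    ext y
    show (∀ K ∈ quots L, (y ∈ K ↔ w ∈ K)) ↔ ∀ K ∈ quots L, (y ∈ K ↔ K ∈ quots L ∧ w ∈ K)
    constructor
    · intro hy K hK
      exact (hy K hK).trans ⟨fun h => ⟨hK, h⟩, fun h => h.2⟩
    · intro hy K hK
      exact (hy K hK).trans ⟨fun h => h.2, fun h => ⟨hK, h⟩⟩

private lemma IsAtomOf.eq_atomIn {x : List α} (hA : IsAtomOf L A) (hx : x ∈ A) :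
    A = atomIn L x := by
  obtain ⟨w, rfl⟩ := isAtomOf_iff.mp hA
  exact (atomIn_eq_of_mem hx).symm

private lemma mem_biUnion_iff {β γ : Type} {T : Set β} {f : β → Set γ} {x : γ} :
    x ∈ ⋃ p ∈ T, f p ↔ ∃ p ∈ T, x ∈ f p := by simp

private lemma evalFrom_biUnion (M : NFA α σ) (S : Set σ) (w : List α) :
    M.evalFrom S w = ⋃ p ∈ S, M.evalFrom {p} w := by
  induction w generalizing S with
  | nil =>
    ext r
    simp only [NFA.evalFrom_nil, mem_biUnion_iff, Set.mem_singleton_iff]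
    exact ⟨fun h => ⟨r, h, rfl⟩, fun ⟨p, hp, h⟩ => h ▸ hp⟩
  | cons a w ih =>
    have h1 : M.evalFrom S (a :: w) = M.evalFrom (M.stepSet S a) w := rfl
    have h2 : ∀ p : σ, M.evalFrom {p} (a :: w) = M.evalFrom (M.stepSet {p} a) w :=
      fun _ => rfl
    rw [h1, ih]
    ext r
    rw [mem_biUnion_iff, mem_biUnion_iff]
    constructor
    · rintro ⟨q, hq, hr⟩
      obtain ⟨p, hp, hq⟩ := mem_biUnion_iff.mp hq
      refine ⟨p, hp, ?_⟩
      rw [h2 p, ih]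
      exact mem_biUnion_iff.mpr ⟨q, by simp [NFA.stepSet]; simpa using hq, hr⟩
    · rintro ⟨p, hp, hr⟩
      rw [h2 p, ih] at hr
      obtain ⟨q, hq, hr⟩ := mem_biUnion_iff.mp hr
      refine ⟨q, ?_, hr⟩
      simp only [NFA.stepSet] at hq ⊢
      exact mem_biUnion_iff.mpr ⟨p, hp, by simpa using hq⟩

private lemma rightLang_nil (M : NFA α σ) (q : σ) :
    [] ∈ M.rightLang q ↔ q ∈ M.accept := by
  simp only [NFA.rightLang, Set.mem_setOf_eq, NFA.evalFrom_nil, Set.mem_singleton_iff]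
  exact ⟨fun ⟨p, hp, h⟩ => h ▸ hp, fun h => ⟨q, h, rfl⟩⟩

private lemma rightLang_cons (M : NFA α σ) (q : σ) (a : α) (w : List α) :
    a :: w ∈ M.rightLang q ↔ ∃ p ∈ M.step q a, w ∈ M.rightLang p := by
  have h2 : M.stepSet {q} a = M.step q a := by simp [NFA.stepSet]
  have key : ∀ p, p ∈ M.evalFrom {q} (a :: w) ↔ ∃ r ∈ M.step q a, p ∈ M.evalFrom {r} w := by
    intro p
    have h1 : M.evalFrom {q} (a :: w) = M.evalFrom (M.stepSet {q} a) w := rfl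
    rw [h1, h2, evalFrom_biUnion M (M.step q a) w]
    exact mem_biUnion_iff
  constructor
  · rintro ⟨p, hp, h⟩
    obtain ⟨r, hr, h⟩ := (key p).mp h
    exact ⟨r, hr, p, hp, h⟩
  · rintro ⟨r, hr, p, hp, h⟩
    exact ⟨p, hp, (key p).mpr ⟨r, hr, h⟩⟩

private lemma mem_accepts_iff (M : NFA α σ) (w : List α) :
    w ∈ M.accepts ↔ ∃ q ∈ M.start, w ∈ M.rightLang q := by
  have key : ∀ p, p ∈ M.eval w ↔ ∃ q ∈ M.start, p ∈ M.evalFrom {q} w := by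
    intro p
    have h1 : M.eval w = M.evalFrom M.start w := rfl
    rw [h1, evalFrom_biUnion M M.start w]
    exact mem_biUnion_iff
  rw [NFA.mem_accepts]
  constructor
  · rintro ⟨p, hp, h⟩
    obtain ⟨q, hq, h⟩ := (key p).mp h
    exact ⟨q, hq, p, hp, h⟩
  · rintro ⟨q, hq, p, hp, h⟩
    exact ⟨p, hp, (key p).mpr ⟨q, hq, h⟩⟩

private lemma mem_atomStepSet {S : Set (Language α)} {a : α} :
    A ∈ atomStepSet L S a ↔ ∃ C ∈ S, IsAtomOf L A ∧ ∀ x ∈ A, a :: x ∈ C := by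
  simp only [atomStepSet, mem_biUnion_iff]
  rfl

private lemma mem_biUnion_st {T : Set σ} {st : σ → Set (Language α)} :
    A ∈ ⋃ p ∈ T, st p ↔ ∃ p ∈ T, A ∈ st p := mem_biUnion_iff

end Helpers

/-- **Legality.** Let `B` be a trim NFA whose states are distinct non-empty sets
of positive atoms of a non-empty regular language `L` (given by the injective map `st`). Then
`B` is a reduced atomic NFA accepting `L` in which the right language of each state equals the
union of its atoms, if and only if: (1) the union of the sets of atoms of the initial states is
the set of initial atoms of `L`; (2) `S(β(q, a)) = α(st q, a)` for every state `q` and letter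
`a`; and (3) a state is final iff it contains the final atom `atomIn L []`. -/
theorem legality {α σ : Type} [Finite α] [Finite σ] {L : Language α} (hL : L.IsRegular)
    (hne : ∃ w, w ∈ L) (B : NFA α σ) (st : σ → Set (Language α))
    (hdist : Function.Injective st)
    (hatoms : ∀ q, (st q).Nonempty ∧ ∀ A ∈ st q, IsPositiveAtomOf L A)
    (htrim : B.IsTrim) :
    (B.accepts = L ∧ B.IsReduced ∧ B.IsAtomic ∧
        ∀ q, B.rightLang q = {w | ∃ A ∈ st q, w ∈ A}) ↔
      ((⋃ q ∈ B.start, st q) = {A : Language α | IsAtomOf L A ∧ ∀ x ∈ A, x ∈ L} ∧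
        (∀ q a, (⋃ p ∈ B.step q a, st p) = atomStepSet L (st q) a) ∧
        (∀ q, q ∈ B.accept ↔ atomIn L [] ∈ st q)) := by
  -- `st q` consists of atoms; the atom containing a point is unique.
  have hatom : ∀ q, ∀ A ∈ st q, IsAtomOf L A := fun q A hA => ((hatoms q).2 A hA).1
  -- Membership of `[]` in the union of `st q` characterizes the final atom.
  have hfin : ∀ q, (∃ A ∈ st q, [] ∈ A) ↔ atomIn L [] ∈ st q := by
    intro q
    constructor
    · rintro ⟨A, hA, h0⟩
      rwa [(hatom q A hA).eq_atomIn h0] at hA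
    · intro h
      exact ⟨_, h, self_mem_atomIn⟩
  constructor
  · rintro ⟨hacc, hred, hatomic, hR⟩
    have hR' : ∀ q w, w ∈ B.rightLang q ↔ ∃ A ∈ st q, w ∈ A := by
      intro q w
      rw [hR q]; rfl
    refine ⟨?_, ?_, ?_⟩
    · -- initial condition
      ext A
      simp only [mem_biUnion_st, Set.mem_setOf_eq]
      constructor
      · rintro ⟨q, hq, hA⟩
        refine ⟨hatom q A hA, fun x hx => ?_⟩
        have hx' : x ∈ B.rightLang q := (hR' q x).mpr ⟨A, hA, hx⟩
        have : x ∈ B.accepts := (mem_accepts_iff B x).mpr ⟨q, hq, hx'⟩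
        rwa [hacc] at this
      · rintro ⟨hA, hAL⟩
        obtain ⟨w, rfl⟩ := isAtomOf_iff.mp hA
        have hw : w ∈ L := hAL w self_mem_atomIn
        rw [← hacc] at hw
        obtain ⟨q, hq, hw⟩ := (mem_accepts_iff B w).mp hw
        obtain ⟨A', hA', hwA'⟩ := (hR' q w).mp hw
        refine ⟨q, hq, ?_⟩
        rwa [(hatom q A' hA').eq_atomIn hwA'] at hA'
    · -- transition condition
      intro q a
      ext A
      rw [mem_biUnion_st, mem_atomStepSet]
      constructor
      · rintro ⟨p, hp, hA⟩
        obtain ⟨w, hwA⟩ := (hatom p A hA).1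
        have hAeq : A = atomIn L w := (hatom p A hA).eq_atomIn hwA
        have hw : w ∈ B.rightLang p := (hR' p w).mpr ⟨A, hA, hwA⟩
        have haw : a :: w ∈ B.rightLang q := (rightLang_cons B q a w).mpr ⟨p, hp, hw⟩
        obtain ⟨C, hC, hawC⟩ := (hR' q (a :: w)).mp haw
        have hCeq : C = atomIn L (a :: w) := (hatom q C hC).eq_atomIn hawC
        refine ⟨C, hC, hatom p A hA, ?_⟩
        intro x hx
        rw [hCeq]
        exact atomIn_cons a (hAeq ▸ hx)
      · rintro ⟨C, hCq, hAat, hstep⟩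
        obtain ⟨w, hwA⟩ := hAat.1
        have haw : a :: w ∈ B.rightLang q := (hR' q (a :: w)).mpr ⟨C, hCq, hstep w hwA⟩
        obtain ⟨p, hp, hw⟩ := (rightLang_cons B q a w).mp haw
        obtain ⟨A', hA', hwA'⟩ := (hR' p w).mp hw
        refine ⟨p, hp, ?_⟩
        rwa [(hatom p A' hA').eq_atomIn hwA', ← hAat.eq_atomIn hwA] at hA'
    · -- acceptance condition
      intro q
      rw [← rightLang_nil B q, hR' q, hfin q]
  · rintro ⟨h1, h2, h3⟩
    -- the right language of every state is the union of its atoms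
    have hR : ∀ w q, w ∈ B.rightLang q ↔ ∃ A ∈ st q, w ∈ A := by
      intro w
      induction w with
      | nil =>
        intro q
        rw [rightLang_nil B q, h3 q, hfin q]
      | cons a w ih =>
        intro q
        rw [rightLang_cons B q a w]
        constructor
        · rintro ⟨p, hp, hw⟩
          obtain ⟨A, hA, hwA⟩ := (ih p).mp hw
          have hA' : A ∈ atomStepSet L (st q) a := by
            rw [← h2 q a]
            exact mem_biUnion_st.mpr ⟨p, hp, hA⟩
          obtain ⟨C, hCq, hAat, hstep⟩ := mem_atomStepSet.mp hA'
          exact ⟨C, hCq, hstep w hwA⟩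
        · rintro ⟨C, hCq, hawC⟩
          have hCeq : C = atomIn L (a :: w) := (hatom q C hCq).eq_atomIn hawC
          have hA' : atomIn L w ∈ atomStepSet L (st q) a := by
            refine mem_atomStepSet.mpr ⟨C, hCq, isAtomOf_iff.mpr ⟨w, rfl⟩, fun x hx => ?_⟩
            rw [hCeq]
            exact atomIn_cons a hx
          rw [← h2 q a] at hA'
          obtain ⟨p, hp, hA⟩ := mem_biUnion_st.mp hA'
          exact ⟨p, hp, (ih p).mpr ⟨atomIn L w, hA, self_mem_atomIn⟩⟩
    have hRset : ∀ q, B.rightLang q = {w | ∃ A ∈ st q, w ∈ A} := by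
      intro q; ext w; exact hR w q
    have hacc : B.accepts = L := by
      ext w
      rw [mem_accepts_iff B w]
      constructor
      · rintro ⟨q, hq, hw⟩
        obtain ⟨A, hA, hwA⟩ := (hR w q).mp hw
        have : A ∈ ⋃ q ∈ B.start, st q := mem_biUnion_st.mpr ⟨q, hq, hA⟩
        rw [h1] at this
        exact this.2 w hwA
      · intro hw
        have : atomIn L w ∈ ⋃ q ∈ B.start, st q := by
          rw [h1]
          refine ⟨isAtomOf_iff.mpr ⟨w, rfl⟩, fun x hx => ?_⟩
          simpa using (mem_atomIn.mp hx []).mpr (by simpa using hw)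
        obtain ⟨q, hq, hA⟩ := mem_biUnion_st.mp this
        exact ⟨q, hq, (hR w q).mpr ⟨atomIn L w, hA, self_mem_atomIn⟩⟩
    refine ⟨hacc, ?_, ?_, hRset⟩
    · -- reduced
      have key : ∀ q p : σ, {w | ∃ A ∈ st q, w ∈ A} = {w | ∃ A ∈ st p, w ∈ A} →
          st q ⊆ st p := by
        intro q p h A hA
        obtain ⟨x, hx⟩ := (hatom q A hA).1
        have hxmem : x ∈ {w | ∃ A' ∈ st p, w ∈ A'} := h ▸ ⟨A, hA, hx⟩
        obtain ⟨A', hA', hxA'⟩ := hxmem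
        rwa [(hatom q A hA).eq_atomIn hx, ← (hatom p A' hA').eq_atomIn hxA']
      intro q p hqp
      rw [hRset, hRset] at hqp
      exact hdist (Set.Subset.antisymm (key q p hqp) (key p q hqp.symm))
    · -- atomic
      intro q
      refine ⟨st q, fun A hA => ?_, hRset q⟩
      rw [hacc]
      exact (hatoms q).2 A hA
end

section
/- Let L be a non-empty regular language. Let 𝒞 be the collection of all non-empty sets B of positive atoms of L such that B ⊆ {A atom of L : A ⊆ K_j} for some left quotient K_j of L. Then there exist a transition function β, a set of initial states 𝒞_I ⊆ 𝒞, and a set of final states 𝒞_F ⊆ 𝒞 such that (𝒞, Σ, β, 𝒞_I, 𝒞_F) is a trim reduced atomic NFA accepting L whose state set is exactly 𝒞. -/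
section MaxAtomic

variable {α : Type} {L : Language α}

/-- The atom (equivalence class) of a word `x`. -/
def atomOf (L : Language α) (x : List α) : Language α :=
  {y | ∀ K ∈ quots L, (y ∈ K ↔ x ∈ K)}

lemma mem_atomOf_self (x : List α) : x ∈ atomOf L x := fun _ _ => Iff.rfl

lemma atomOf_isAtom (x : List α) : IsAtomOf L (atomOf L x) := by
  refine ⟨⟨x, mem_atomOf_self x⟩, {K | K ∈ quots L ∧ x ∈ K}, fun K hK => hK.1, ?_⟩
  ext y
  constructor
  · intro hy K hK
    exact (hy K hK).trans ⟨fun h => ⟨hK, h⟩, fun h => h.2⟩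
  · intro hy K hK
    exact (hy K hK).trans ⟨fun h => h.2, fun h => ⟨hK, h⟩⟩

lemma atomOf_subset {K : Language α} (hK : K ∈ quots L) {x : List α} (hx : x ∈ K) :
    ∀ y ∈ atomOf L x, y ∈ K := fun _ hy => (hy K hK).mpr hx

lemma atomOf_positive {K : Language α} (hK : K ∈ quots L) {x : List α} (hx : x ∈ K) :
    IsPositiveAtomOf L (atomOf L x) :=
  ⟨atomOf_isAtom x, K, hK, atomOf_subset hK hx⟩

lemma atom_eq_atomOf {A : Language α} (hA : IsAtomOf L A) {x : List α} (hx : x ∈ A) :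
    A = atomOf L x := by
  obtain ⟨-, S, -, rfl⟩ := hA
  ext y
  constructor
  · intro hy K hK
    exact (hy K hK).trans (hx K hK).symm
  · intro hy K hK
    exact (hy K hK).trans (hx K hK)

lemma quot_cons {K : Language α} (hK : K ∈ quots L) (a : α) :
    {w | a :: w ∈ K} ∈ quots L := by
  obtain ⟨u, rfl⟩ := hK
  refine ⟨u ++ [a], ?_⟩
  ext w
  show u ++ (a :: w) ∈ L ↔ (u ++ [a]) ++ w ∈ L
  simp

lemma atomOf_cons {x y : List α} (a : α) (hy : y ∈ atomOf L x) :
    a :: y ∈ atomOf L (a :: x) := fun K hK => hy {w | a :: w ∈ K} (quot_cons hK a)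

lemma mem_leftQuot_append_singleton {u : List α} {a : α} {w : List α} :
    w ∈ leftQuot L (u ++ [a]) ↔ a :: w ∈ leftQuot L u := by
  show (u ++ [a]) ++ w ∈ L ↔ u ++ (a :: w) ∈ L
  simp

/-- The state type of the maximal atomic NFA. -/
abbrev MaxSt (L : Language α) : Type :=
  {Bs : Set (Language α) // Bs.Nonempty ∧ (∀ A ∈ Bs, IsPositiveAtomOf L A) ∧
    ∃ K ∈ quots L, ∀ A ∈ Bs, ∀ x ∈ A, x ∈ K}

/-- The union of the atoms in a state. -/
def UB (B : MaxSt L) : Language α := {w | ∃ A ∈ B.1, w ∈ A}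

/-- The singleton state consisting of the atom of `x`, when `x` lies in the quotient `K`. -/
def atomState (L : Language α) (x : List α) (K : Language α) (hK : K ∈ quots L) (hx : x ∈ K) :
    MaxSt L :=
  ⟨{atomOf L x}, ⟨_, rfl⟩,
    fun A hA => by rw [Set.mem_singleton_iff] at hA; exact hA ▸ atomOf_positive hK hx,
    K, hK, fun A hA => by rw [Set.mem_singleton_iff] at hA; exact hA ▸ atomOf_subset hK hx⟩

lemma UB_atomState (L : Language α) (x : List α) (K : Language α) (hK : K ∈ quots L)
    (hx : x ∈ K) : UB (atomState L x K hK hx) = atomOf L x := by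
  ext w
  constructor
  · rintro ⟨A, hA, hw⟩
    exact (show A = atomOf L x from hA) ▸ hw
  · intro hw
    exact ⟨atomOf L x, rfl, hw⟩

/-- The state consisting of all positive atoms contained in the quotient `leftQuot L u`. -/
def quotState (L : Language α) (u : List α) (h : ∃ x, x ∈ leftQuot L u) : MaxSt L :=
  ⟨{A | IsPositiveAtomOf L A ∧ ∀ y ∈ A, y ∈ leftQuot L u},
    ⟨atomOf L h.choose, atomOf_positive ⟨u, rfl⟩ h.choose_spec,
      atomOf_subset ⟨u, rfl⟩ h.choose_spec⟩,
    fun A hA => hA.1, leftQuot L u, ⟨u, rfl⟩, fun A hA => hA.2⟩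

lemma UB_quotState (L : Language α) (u : List α) (h : ∃ x, x ∈ leftQuot L u) :
    UB (quotState L u h) = leftQuot L u := by
  ext w
  constructor
  · rintro ⟨A, hA, hw⟩
    exact hA.2 w hw
  · intro hw
    exact ⟨atomOf L w, ⟨atomOf_positive ⟨u, rfl⟩ hw, atomOf_subset ⟨u, rfl⟩ hw⟩,
      mem_atomOf_self w⟩

/-- The maximal atomic NFA. -/
def bigM (L : Language α) : NFA α (MaxSt L) where
  step B a := {B' | ∀ w ∈ UB B', a :: w ∈ UB B}
  start := {B | ∀ w ∈ UB B, w ∈ leftQuot L []}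
  accept := {B | [] ∈ UB B}

lemma bigM_stepSet (u : List α) (a : α) :
    (bigM L).stepSet {B | ∀ w ∈ UB B, w ∈ leftQuot L u} a
      = {B | ∀ w ∈ UB B, w ∈ leftQuot L (u ++ [a])} := by
  ext B'
  rw [NFA.mem_stepSet]
  constructor
  · rintro ⟨B, hB, hstep⟩ w hw
    exact mem_leftQuot_append_singleton.mpr (hB (a :: w) (hstep w hw))
  · intro h
    obtain ⟨A, hA⟩ := B'.2.1
    obtain ⟨x, hx⟩ := (B'.2.2.1 A hA).1.1
    have hax : a :: x ∈ leftQuot L u :=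
      mem_leftQuot_append_singleton.mp (h x ⟨A, hA, hx⟩)
    refine ⟨quotState L u ⟨a :: x, hax⟩, ?_, ?_⟩
    · intro w hw
      rw [UB_quotState] at hw
      exact hw
    · intro w hw
      rw [UB_quotState]
      exact mem_leftQuot_append_singleton.mp (h w hw)

lemma bigM_evalFrom (w u : List α) :
    (bigM L).evalFrom {B | ∀ v ∈ UB B, v ∈ leftQuot L u} w
      = {B | ∀ v ∈ UB B, v ∈ leftQuot L (u ++ w)} := by
  induction w generalizing u with
  | nil => simp
  | cons a w ih =>
    show (bigM L).evalFrom ((bigM L).stepSet _ a) w = _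
    rw [bigM_stepSet, ih]
    simp

lemma bigM_eval (w : List α) :
    (bigM L).eval w = {B | ∀ v ∈ UB B, v ∈ leftQuot L w} := by
  have h := bigM_evalFrom (L := L) w []
  simp only [List.nil_append] at h
  exact h

lemma bigM_rightAux : ∀ (w : List α) (S : Set (MaxSt L)),
    (∃ p ∈ (bigM L).accept, p ∈ (bigM L).evalFrom S w) ↔ ∃ B ∈ S, w ∈ UB B := by
  intro w
  induction w with
  | nil =>
    intro S
    exact ⟨fun ⟨p, h1, h2⟩ => ⟨p, h2, h1⟩, fun ⟨p, h1, h2⟩ => ⟨p, h2, h1⟩⟩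
  | cons a w ih =>
    intro S
    show (∃ p ∈ (bigM L).accept, p ∈ (bigM L).evalFrom ((bigM L).stepSet S a) w) ↔ _
    rw [ih]
    constructor
    · rintro ⟨B', hB', hw⟩
      rw [NFA.mem_stepSet] at hB'
      obtain ⟨B, hB, hstep⟩ := hB'
      exact ⟨B, hB, hstep w hw⟩
    · rintro ⟨B, hB, hw⟩
      obtain ⟨A, hAB, hwA⟩ := hw
      obtain ⟨K, hK, hKall⟩ := B.2.2.2
      have hawK : a :: w ∈ K := hKall A hAB (a :: w) hwA
      refine ⟨atomState L w {v | a :: v ∈ K} (quot_cons hK a) hawK, ?_, ?_⟩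
      · rw [NFA.mem_stepSet]
        refine ⟨B, hB, ?_⟩
        intro y hy
        replace hy := (congrArg (y ∈ ·) (UB_atomState L w {v | a :: v ∈ K} (quot_cons hK a) hawK)).mp hy
        have h1 : a :: y ∈ atomOf L (a :: w) := atomOf_cons a hy
        have hAeq : A = atomOf L (a :: w) := atom_eq_atomOf (B.2.2.1 A hAB).1 hwA
        exact ⟨A, hAB, hAeq ▸ h1⟩
      · exact (congrArg (w ∈ ·) (UB_atomState L w {v | a :: v ∈ K} (quot_cons hK a) hawK)).mpr (mem_atomOf_self w)

lemma bigM_rightLang (B : MaxSt L) : (bigM L).rightLang B = UB B := by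
  ext w
  show (∃ p ∈ (bigM L).accept, p ∈ (bigM L).evalFrom {B} w) ↔ _
  rw [bigM_rightAux w {B}]
  constructor
  · rintro ⟨B', hB', hw⟩
    rw [Set.mem_singleton_iff] at hB'
    exact hB' ▸ hw
  · intro hw
    exact ⟨B, rfl, hw⟩

lemma states_subset {q p : MaxSt L} (h : ∀ w ∈ UB q, w ∈ UB p) : q.1 ⊆ p.1 := by
  intro A hA
  obtain ⟨x, hx⟩ := (q.2.2.1 A hA).1.1
  obtain ⟨A', hA', hx'⟩ := h x ⟨A, hA, hx⟩
  have e1 : A = atomOf L x := atom_eq_atomOf (q.2.2.1 A hA).1 hx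
  have e2 : A' = atomOf L x := atom_eq_atomOf (p.2.2.1 A' hA').1 hx'
  rw [e1, ← e2]
  exact hA'

end MaxAtomic
/-- **Maximal atomic NFA.** Let `𝒞` be the collection of all non-empty sets of
positive atoms of a non-empty regular language `L` all of whose members are contained in some
single left quotient of `L`. Then there is an NFA with state set exactly `𝒞` that is a trim
reduced atomic NFA accepting `L`. -/
theorem maximal_atomic_nfa {α : Type} [Finite α] {L : Language α} (hL : L.IsRegular)
    (hne : ∃ w, w ∈ L) :
    ∃ M : NFA α {Bs : Set (Language α) // Bs.Nonempty ∧ (∀ A ∈ Bs, IsPositiveAtomOf L A) ∧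
        ∃ K ∈ quots L, ∀ A ∈ Bs, ∀ x ∈ A, x ∈ K},
      M.accepts = L ∧ M.IsTrim ∧ M.IsReduced ∧ M.IsAtomic := by
  have hacc : (bigM L).accepts = L := by
    ext w
    show (∃ B ∈ (bigM L).accept, B ∈ (bigM L).eval w) ↔ w ∈ L
    rw [bigM_eval]
    constructor
    · rintro ⟨B, hBacc, hBev⟩
      have h2 : w ++ [] ∈ L := hBev [] hBacc
      simpa using h2
    · intro hw
      have h0 : [] ∈ leftQuot L w := by
        show w ++ [] ∈ L
        simpa using hw
      refine ⟨atomState L [] (leftQuot L w) ⟨w, rfl⟩ h0, ?_, ?_⟩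
      · show [] ∈ UB _
        exact (congrArg (([] : List α) ∈ ·) (UB_atomState L [] (leftQuot L w) ⟨w, rfl⟩ h0)).mpr (mem_atomOf_self [])
      · intro v hv
        replace hv := (congrArg (v ∈ ·) (UB_atomState L [] (leftQuot L w) ⟨w, rfl⟩ h0)).mp hv
        exact atomOf_subset ⟨w, rfl⟩ h0 v hv
  have htrim : (bigM L).IsTrim := by
    intro B
    constructor
    · obtain ⟨K, ⟨u, rfl⟩, hKall⟩ := B.2.2.2
      refine ⟨u, ?_⟩
      show B ∈ (bigM L).eval u
      rw [bigM_eval]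
      rintro v ⟨A, hA, hv⟩
      exact hKall A hA v hv
    · obtain ⟨A, hA⟩ := B.2.1
      obtain ⟨x, hx⟩ := (B.2.2.1 A hA).1.1
      refine ⟨x, ?_⟩
      show x ∈ (bigM L).rightLang B
      rw [bigM_rightLang]
      exact ⟨A, hA, hx⟩
  have hred : (bigM L).IsReduced := by
    intro q p h
    rw [bigM_rightLang, bigM_rightLang] at h
    apply Subtype.ext
    apply Set.Subset.antisymm
    · exact states_subset (fun w hw => h ▸ hw)
    · exact states_subset (fun w hw => h ▸ hw)
  have hatom : (bigM L).IsAtomic := by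
    intro q
    refine ⟨q.1, ?_, ?_⟩
    · intro A hA
      rw [hacc]
      exact q.2.2.1 A hA
    · rw [bigM_rightLang]
      rfl
  exact ⟨bigM L, hacc, htrim, hred, hatom⟩
end
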